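/- Let N be a finite nonempty player set and for each nonempty S ⊆ N let μ_S ∈ ℝ and σ_S > 0. Define the mean game μ (value μ_S on each nonempty S, 0 on ∅) and the deviation game σ̂ (value σ_S/σ_N on each nonempty S, 0 on ∅). Then the following are equivalent: (1) there exist d, r : N → ℝ with r_i ≥ 0 for all i, d(N) = μ_N, r(N) = 1, such that for every nonempty S ⊆ N the pushforward of the Gaussian measure N(μ_N, σ_N²) under the map z ↦ d(S) + r(S)·(z − μ_N) second-order stochastically dominates N(μ_S, σ_S²); (2) the core C(μ) is nonempty and the nonnegative cost core C_cost(σ̂) is nonempty. -/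

import Mathlib

open MeasureTheory ProbabilityTheory
open scoped NNReal ENNReal

/-- `P` second-order stochastically dominates `Q`. -/
def SSD (P Q : Measure ℝ) : Prop :=
  ∀ u : ℝ, (∫ z in Set.Iic u, (cdf P z - cdf Q z)) ≤ 0

/-- The core of a TU-game `v` on the finite player set `N`. -/
def core {N : Type*} [Fintype N] (v : Finset N → ℝ) : Set (N → ℝ) :=
  {x | (∀ S : Finset N, v S ≤ ∑ i ∈ S, x i) ∧ ∑ i : N, x i = v Finset.univ}

/-- The nonnegative cost core of a TU-game `v` on the finite player set `N`. -/
def costCore {N : Type*} [Fintype N] (v : Finset N → ℝ) : Set (N → ℝ) :=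
  {x | (∀ i, 0 ≤ x i) ∧ (∀ S : Finset N, ∑ i ∈ S, x i ≤ v S) ∧ ∑ i : N, x i = v Finset.univ}

open Real Filter Set Topology

noncomputable def nphi (x : ℝ) : ℝ := gaussianPDFReal 0 1 x

lemma nphi_eq (x : ℝ) : nphi x = (Real.sqrt (2 * π))⁻¹ * Real.exp (-(x^2) / 2) := by
  simp [nphi, gaussianPDFReal]

lemma nphi_pos (x : ℝ) : 0 < nphi x := gaussianPDFReal_pos 0 1 x one_ne_zero

lemma nphi_nonneg (x : ℝ) : 0 ≤ nphi x := (nphi_pos x).le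

lemma integrable_nphi : Integrable nphi := integrable_gaussianPDFReal 0 1

lemma integral_nphi : ∫ x, nphi x = 1 := integral_gaussianPDFReal_eq_one 0 one_ne_zero

lemma nphi_le_exp (x : ℝ) : nphi x ≤ Real.exp x := by
  rw [nphi_eq, inv_mul_le_iff₀ (by positivity)]
  have h1 : Real.exp (-(x^2)/2) = Real.exp (-(x^2)/2 - x) * Real.exp x := by
    rw [← Real.exp_add]; ring_nf
  rw [h1]
  gcongr
  calc Real.exp (-(x^2)/2 - x) ≤ Real.exp ((1:ℝ)/2) := by
        apply Real.exp_le_exp.mpr; nlinarith [sq_nonneg (x+1)]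
    _ = Real.sqrt (Real.exp 1) := by
        rw [show ((1:ℝ)/2) = 1/2 by norm_num, Real.exp_half]
    _ ≤ Real.sqrt (2*π) := by
        apply Real.sqrt_le_sqrt
        nlinarith [Real.pi_gt_three, Real.exp_one_lt_d9]

lemma nphi_fun_eq : nphi = fun y : ℝ => (Real.sqrt (2 * π))⁻¹ * Real.exp (-(y^2) / 2) :=
  funext nphi_eq

lemma hasDerivAt_nphi (x : ℝ) : HasDerivAt nphi (-x * nphi x) x := by
  have h := (((hasDerivAt_pow 2 x).neg.div_const 2).exp).const_mul (Real.sqrt (2 * π))⁻¹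
  rw [nphi_fun_eq]
  exact h.congr_deriv (by simp only [Pi.neg_apply]; push_cast; ring)

lemma tendsto_nphi_atTop : Tendsto nphi atTop (𝓝 0) := by
  have h1 : Tendsto (fun x : ℝ => -(x^2)/2) atTop atBot := by
    apply Filter.Tendsto.atBot_div_const (by norm_num)
    exact tendsto_neg_atTop_atBot.comp (tendsto_pow_atTop two_ne_zero)
  have h2 := (Real.tendsto_exp_atBot.comp h1).const_mul (Real.sqrt (2 * π))⁻¹
  rw [nphi_fun_eq]
  simpa [Function.comp] using h2

lemma tendsto_nphi_atBot : Tendsto nphi atBot (𝓝 0) := by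
  have hsq : Tendsto (fun x:ℝ => x^2) atBot atTop :=
    Tendsto.congr (fun x => sq_abs x)
      ((tendsto_pow_atTop two_ne_zero).comp tendsto_abs_atBot_atTop)
  have h1 : Tendsto (fun x : ℝ => -(x^2)/2) atBot atBot := by
    apply Filter.Tendsto.atBot_div_const (by norm_num)
    exact tendsto_neg_atTop_atBot.comp hsq
  have h2 := (Real.tendsto_exp_atBot.comp h1).const_mul (Real.sqrt (2 * π))⁻¹
  rw [nphi_fun_eq]
  simpa [Function.comp] using h2
noncomputable def NPhi (x : ℝ) : ℝ := ∫ t in Set.Iic x, nphi t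

lemma NPhi_nonneg (x : ℝ) : 0 ≤ NPhi x :=
  setIntegral_nonneg measurableSet_Iic (fun t _ => nphi_nonneg t)

lemma NPhi_le_one (x : ℝ) : NPhi x ≤ 1 := by
  rw [← integral_nphi]
  exact setIntegral_le_integral integrable_nphi (ae_of_all _ nphi_nonneg)

lemma NPhi_le_exp (x : ℝ) : NPhi x ≤ Real.exp x := by
  rw [← integral_exp_Iic x]
  exact setIntegral_mono_on integrable_nphi.integrableOn (integrableOn_exp_Iic x)
    measurableSet_Iic (fun t _ => nphi_le_exp t)

lemma monotone_NPhi : Monotone NPhi := by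
  intro a b hab
  exact setIntegral_mono_set integrable_nphi.integrableOn
    (ae_of_all _ nphi_nonneg) (HasSubset.Subset.eventuallyLE (Set.Iic_subset_Iic.mpr hab))

lemma tendsto_NPhi_atBot : Tendsto NPhi atBot (𝓝 0) := by
  apply tendsto_of_tendsto_of_tendsto_of_le_of_le tendsto_const_nhds
    Real.tendsto_exp_atBot NPhi_nonneg NPhi_le_exp

lemma NPhi_eq_interval (x : ℝ) : NPhi x = NPhi 0 + ∫ t in (0:ℝ)..x, nphi t := by
  have := intervalIntegral.integral_Iic_sub_Iic
    (integrable_nphi.integrableOn (s := Set.Iic 0))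
    (integrable_nphi.integrableOn (s := Set.Iic x)) (μ := volume)
  rw [← this]; unfold NPhi; ring

lemma hasDerivAt_NPhi (x : ℝ) : HasDerivAt NPhi (nphi x) x := by
  have h : HasDerivAt (fun u => ∫ t in (0:ℝ)..u, nphi t) (nphi x) x := by
    exact intervalIntegral.integral_hasDerivAt_right
      (integrable_nphi.intervalIntegrable)
      (integrable_nphi.aestronglyMeasurable.stronglyMeasurableAtFilter)
      ((hasDerivAt_nphi x).continuousAt)
  have h2 := h.const_add (NPhi 0)
  have he : NPhi = fun u => NPhi 0 + ∫ t in (0:ℝ)..u, nphi t := funext NPhi_eq_interval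
  rw [he]
  exact h2

lemma continuous_NPhi : Continuous NPhi :=
  continuous_iff_continuousAt.mpr fun x => (hasDerivAt_NPhi x).continuousAt

lemma one_sub_NPhi (x : ℝ) : 1 - NPhi x = ∫ t in Set.Ioi x, nphi t := by
  have := intervalIntegral.integral_Iic_add_Ioi (b := x)
    integrable_nphi.integrableOn integrable_nphi.integrableOn
  rw [integral_nphi] at this
  unfold NPhi
  linarith

lemma integral_Ioi_mul_nphi {x : ℝ} (hx : 0 ≤ x) :
    ∫ t in Set.Ioi x, t * nphi t = nphi x := by
  have hderiv : ∀ t ∈ Set.Ici x, HasDerivAt (fun y => -nphi y) (t * nphi t) t :=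
    fun t _ => ((hasDerivAt_nphi t).neg).congr_deriv (by ring)
  have := integral_Ioi_of_hasDerivAt_of_nonneg' hderiv
    (fun t ht => mul_nonneg (hx.trans (le_of_lt ht)) (nphi_nonneg t))
    (tendsto_nphi_atTop.neg)
  simpa using this

lemma integrableOn_Ioi_mul_nphi {x : ℝ} (hx : 0 ≤ x) :
    IntegrableOn (fun t => t * nphi t) (Set.Ioi x) := by
  have hderiv : ∀ t ∈ Set.Ici x, HasDerivAt (fun y => -nphi y) (t * nphi t) t :=
    fun t _ => ((hasDerivAt_nphi t).neg).congr_deriv (by ring)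
  exact integrableOn_Ioi_deriv_of_nonneg' hderiv
    (fun t ht => mul_nonneg (hx.trans (le_of_lt ht)) (nphi_nonneg t))
    (tendsto_nphi_atTop.neg)

lemma mill (x : ℝ) (hx : 0 < x) : x * (1 - NPhi x) ≤ nphi x := by
  rw [one_sub_NPhi, ← integral_const_mul]
  rw [← integral_Ioi_mul_nphi hx.le]
  apply setIntegral_mono_on ((integrable_nphi.integrableOn).const_mul x)
    (integrableOn_Ioi_mul_nphi hx.le) measurableSet_Ioi
  intro t ht
  exact mul_le_mul_of_nonneg_right (le_of_lt ht) (nphi_nonneg t)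
noncomputable def npsi (x : ℝ) : ℝ := nphi x + x * NPhi x

lemma hasDerivAt_npsi (x : ℝ) : HasDerivAt npsi (NPhi x) x := by
  have h2 : HasDerivAt (fun y => nphi y + y * NPhi y) (NPhi x) x := by
    have h := (hasDerivAt_nphi x).add ((hasDerivAt_id x).mul (hasDerivAt_NPhi x))
    simp only [id_eq, one_mul] at h
    exact h.congr_deriv (by ring)
  exact h2

lemma npsi_monotone : Monotone npsi := by
  apply monotone_of_deriv_nonneg (fun x => (hasDerivAt_npsi x).differentiableAt)
  intro x
  rw [(hasDerivAt_npsi x).deriv]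
  exact NPhi_nonneg x

lemma tendsto_npsi_atBot : Tendsto npsi atBot (𝓝 0) := by
  have hmul : Tendsto (fun x : ℝ => x * NPhi x) atBot (𝓝 0) := by
    have hx : Tendsto (fun x : ℝ => x * Real.exp x) atBot (𝓝 0) := by
      have := (Real.tendsto_pow_mul_exp_neg_atTop_nhds_zero 1).comp tendsto_neg_atBot_atTop
      have h2 := this.neg
      simp only [Function.comp, pow_one, neg_neg, neg_zero] at h2
      convert h2 using 2 with x
      ring
    apply tendsto_of_tendsto_of_tendsto_of_le_of_le' hx tendsto_const_nhds
    · filter_upwards [eventually_le_atBot (0:ℝ)] with x hx0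
      exact mul_le_mul_of_nonpos_left (NPhi_le_exp x) hx0
    · filter_upwards [eventually_le_atBot (0:ℝ)] with x hx0
      exact mul_nonpos_of_nonpos_of_nonneg hx0 (NPhi_nonneg x)
  have := tendsto_nphi_atBot.add hmul
  show Tendsto (fun x => nphi x + x * NPhi x) atBot (𝓝 0)
  simpa using this

lemma npsi_ge_id (x : ℝ) : x ≤ npsi x := by
  rcases le_or_gt x 0 with hx | hx
  · have h1 : 0 ≤ x * (NPhi x - 1) := by nlinarith [NPhi_le_one x]
    have := nphi_nonneg x
    unfold npsi; nlinarith
  · have := mill x hx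
    unfold npsi; nlinarith

lemma npsi_le_add_nphi {x : ℝ} (hx : 0 ≤ x) : npsi x ≤ x + nphi x := by
  have : x * NPhi x ≤ x * 1 := mul_le_mul_of_nonneg_left (NPhi_le_one x) hx
  unfold npsi; linarith

lemma npsi_le_nphi {x : ℝ} (hx : x ≤ 0) : npsi x ≤ nphi x := by
  have : x * NPhi x ≤ 0 := mul_nonpos_of_nonpos_of_nonneg hx (NPhi_nonneg x)
  unfold npsi; linarith

lemma integrableOn_NPhi_Iic (u : ℝ) : IntegrableOn NPhi (Set.Iic u) := by
  apply Integrable.mono (integrableOn_exp_Iic u)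
    (continuous_NPhi.aestronglyMeasurable.restrict)
  filter_upwards [] with t
  rw [Real.norm_eq_abs, Real.norm_eq_abs, abs_of_nonneg (NPhi_nonneg t),
    abs_of_nonneg (Real.exp_nonneg t)]
  exact NPhi_le_exp t

lemma integral_NPhi_Iic (u : ℝ) : ∫ t in Set.Iic u, NPhi t = npsi u := by
  have := integral_Iic_of_hasDerivAt_of_tendsto' (f := npsi) (f' := NPhi) (a := u)
    (fun t _ => hasDerivAt_npsi t) (integrableOn_NPhi_Iic u) tendsto_npsi_atBot
  rw [this]; ring

lemma npsi_nonneg (x : ℝ) : 0 ≤ npsi x := by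
  rw [← integral_NPhi_Iic]
  exact setIntegral_nonneg measurableSet_Iic (fun t _ => NPhi_nonneg t)

lemma integral_Ioc_ge (f : ℝ → ℝ) (hf : IntegrableOn f (Set.Iic b)) (hnn : ∀ t, 0 ≤ f t)
    (c : ℝ) (hc : ∀ t ∈ Set.Ioc (b-1) b, c ≤ f t) (hc0 : 0 ≤ c) :
    c ≤ ∫ t in Set.Iic b, f t := by
  have h1 : ∫ t in Set.Ioc (b-1) b, f t ≤ ∫ t in Set.Iic b, f t :=
    setIntegral_mono_set hf (ae_of_all _ hnn)
      (HasSubset.Subset.eventuallyLE (fun t ht => ht.2))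
  have h2 : ∫ t in Set.Ioc (b-1) b, (c:ℝ) ≤ ∫ t in Set.Ioc (b-1) b, f t := by
    apply setIntegral_mono_on (integrableOn_const measure_Ioc_lt_top.ne)
      (hf.mono_set (fun t ht => ht.2)) measurableSet_Ioc hc
  have h3 : ∫ t in Set.Ioc (b-1) b, (c:ℝ) = c := by
    rw [setIntegral_const, measureReal_def, Real.volume_Ioc]
    norm_num
  linarith

lemma nphi_le_NPhi {x : ℝ} (hx : x ≤ 0) : nphi (x - 1) ≤ NPhi x := by
  apply integral_Ioc_ge nphi integrable_nphi.integrableOn nphi_nonneg _ _ (nphi_nonneg _)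
  intro t ht
  have hmono : MonotoneOn nphi (Set.Iic 0) := by
    apply monotoneOn_of_deriv_nonneg (convex_Iic 0)
      (continuous_iff_continuousAt.mpr fun y => (hasDerivAt_nphi y).continuousAt).continuousOn
      (fun y _ => (hasDerivAt_nphi y).differentiableAt.differentiableWithinAt)
    intro y hy
    rw [(hasDerivAt_nphi y).deriv]
    rw [interior_Iic] at hy
    nlinarith [nphi_nonneg y, Set.mem_Iio.mp hy]
  exact hmono (by simp; linarith [ht.2]) (Set.mem_Iic.mpr (ht.2.trans hx)) (by linarith [ht.1])

lemma NPhi_le_npsi {x : ℝ} (hx : x ≤ 1) : NPhi (x - 1) ≤ npsi x := by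
  rw [← integral_NPhi_Iic]
  apply integral_Ioc_ge NPhi (integrableOn_NPhi_Iic x) NPhi_nonneg _ _ (NPhi_nonneg _)
  intro t ht
  exact monotone_NPhi (le_of_lt ht.1)

lemma nphi_le_npsi {x : ℝ} (hx : x ≤ 1) : nphi (x - 2) ≤ npsi x := by
  have h1 : nphi ((x-1) - 1) ≤ NPhi (x - 1) := nphi_le_NPhi (by linarith)
  have h2 := NPhi_le_npsi hx
  have : x - 1 - 1 = x - 2 := by ring
  rw [this] at h1
  linarith
lemma integrableOn_exp_div_Iic (s u : ℝ) (hs : 0 < s) :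
    IntegrableOn (fun z => Real.exp (z/s)) (Set.Iic u) := by
  rw [← (Measure.measurePreserving_neg (volume : Measure ℝ)).integrableOn_comp_preimage
      (Homeomorph.neg ℝ).measurableEmbedding]
  simp only [Function.comp_def, neg_preimage, neg_Iic]
  rw [integrableOn_Ici_iff_integrableOn_Ioi]
  refine (exp_neg_integrableOn_Ioi (-u) (show (0:ℝ) < 1/s by positivity)).congr_fun
    (fun x _ => ?_) measurableSet_Ioi
  congr 1
  ring

lemma integrableOn_exp_affine_Iic (m s u : ℝ) (hs : 0 < s) :
    IntegrableOn (fun z => Real.exp ((z - m)/s)) (Set.Iic u) := by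
  have h := (integrableOn_exp_div_Iic s u hs).const_mul (Real.exp (-m/s))
  refine IntegrableOn.congr_fun h (fun z _ => ?_) measurableSet_Iic
  rw [← Real.exp_add]
  congr 1
  ring

lemma integrableOn_NPhi_affine (m s u : ℝ) (hs : 0 < s) :
    IntegrableOn (fun z => NPhi ((z - m)/s)) (Set.Iic u) := by
  apply Integrable.mono (integrableOn_exp_affine_Iic m s u hs)
  · exact (continuous_NPhi.comp ((continuous_id.sub continuous_const).div_const s)
      ).aestronglyMeasurable.restrict
  filter_upwards [] with t
  rw [Real.norm_eq_abs, Real.norm_eq_abs, abs_of_nonneg (NPhi_nonneg _),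
    abs_of_nonneg (Real.exp_nonneg _)]
  exact NPhi_le_exp _

instance instIsProbabilityMeasureGaussianRealSubtype (m : ℝ) (v : {r : ℝ // 0 ≤ r}) :
    IsProbabilityMeasure (gaussianReal m v) :=
  instIsProbabilityMeasureGaussianReal m v

lemma gaussianReal_eq_map (m s : ℝ) :
    gaussianReal m ⟨s^2, sq_nonneg s⟩ = ((gaussianReal 0 1).map (s * ·)).map (· + m) := by
  rw [gaussianReal_map_const_mul, gaussianReal_map_add_const]
  congr 1
  · ring
  · rw [mul_one]
    rfl

lemma cdf_gaussianReal_std (x : ℝ) : cdf (gaussianReal 0 1) x = NPhi x := by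
  rw [cdf_eq_real, measureReal_def, gaussianReal_apply_eq_integral 0 one_ne_zero,
    ENNReal.toReal_ofReal (setIntegral_nonneg measurableSet_Iic
      fun t _ => gaussianPDFReal_nonneg 0 1 t)]
  rfl

lemma cdf_gaussian (m s z : ℝ) (hs : 0 < s) :
    cdf (gaussianReal m ⟨s^2, sq_nonneg s⟩) z = NPhi ((z - m)/s) := by
  rw [cdf_eq_real, measureReal_def, gaussianReal_eq_map m s,
    Measure.map_apply (measurable_add_const m) measurableSet_Iic]
  have h1 : (· + m) ⁻¹' (Set.Iic z) = Set.Iic (z - m) := by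
    ext t; simp [le_sub_iff_add_le]
  rw [h1, Measure.map_apply (measurable_const_mul s) measurableSet_Iic]
  have h2 : (s * ·) ⁻¹' (Set.Iic (z - m)) = Set.Iic ((z - m)/s) := by
    ext t; simp [le_div_iff₀ hs, mul_comm]
  rw [h2, ← measureReal_def, ← cdf_eq_real, cdf_gaussianReal_std]

lemma integrableOn_cdf_gaussian (m s u : ℝ) (hs : 0 < s) :
    IntegrableOn (cdf (gaussianReal m ⟨s^2, sq_nonneg s⟩)) (Set.Iic u) := by
  have h : cdf (gaussianReal m ⟨s^2, sq_nonneg s⟩) = fun z => NPhi ((z - m)/s) :=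
    funext fun z => cdf_gaussian m s z hs
  rw [h]
  exact integrableOn_NPhi_affine m s u hs

lemma integral_cdf_gaussian (m s u : ℝ) (hs : 0 < s) :
    ∫ z in Set.Iic u, cdf (gaussianReal m ⟨s^2, sq_nonneg s⟩) z = s * npsi ((u - m)/s) := by
  have h : cdf (gaussianReal m ⟨s^2, sq_nonneg s⟩) = fun z => NPhi ((z - m)/s) :=
    funext fun z => cdf_gaussian m s z hs
  rw [h]
  have hderiv : ∀ z ∈ Set.Iic u, HasDerivAt (fun z => s * npsi ((z - m)/s))
      (NPhi ((z - m)/s)) z := by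
    intro z _
    have hin : HasDerivAt (fun z : ℝ => (z - m)/s) (1/s) z :=
      ((hasDerivAt_id z).sub_const m).div_const s
    have := ((hasDerivAt_npsi ((z - m)/s)).comp z hin).const_mul s
    exact this.congr_deriv (by field_simp)
  have htend : Tendsto (fun z => s * npsi ((z - m)/s)) atBot (𝓝 0) := by
    have hin : Tendsto (fun z : ℝ => (z - m)/s) atBot atBot := by
      apply Filter.Tendsto.atBot_div_const hs
      simpa [sub_eq_add_neg] using tendsto_atBot_add_const_right atBot (-m) tendsto_id
    have := (tendsto_npsi_atBot.comp hin).const_mul s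
    simpa using this
  have := integral_Iic_of_hasDerivAt_of_tendsto' hderiv (integrableOn_NPhi_affine m s u hs)
    htend
  rw [this]; ring

lemma nnreal_sq_zero : (⟨(0:ℝ)^2, sq_nonneg 0⟩ : ℝ≥0) = 0 := by
  ext; norm_num

lemma cdf_gaussian_zero (m z : ℝ) :
    cdf (gaussianReal m ⟨(0:ℝ)^2, sq_nonneg 0⟩) z = Set.indicator (Set.Ici m) (fun _ => (1:ℝ)) z := by
  have hz : gaussianReal m ⟨(0:ℝ)^2, sq_nonneg 0⟩ = Measure.dirac m := by
    convert gaussianReal_zero_var m using 2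
    exact congrArg (gaussianReal m) (NNReal.eq (by show (0:ℝ)^2 = 0; norm_num))
  rw [hz, cdf_eq_real, measureReal_def,
    Measure.dirac_apply' _ measurableSet_Iic]
  by_cases h : m ≤ z <;> simp [Set.indicator, h]

lemma integrableOn_cdf_gaussian_zero (m u : ℝ) :
    IntegrableOn (cdf (gaussianReal m ⟨(0:ℝ)^2, sq_nonneg 0⟩)) (Set.Iic u) := by
  have h : cdf (gaussianReal m ⟨(0:ℝ)^2, sq_nonneg 0⟩)
      = Set.indicator (Set.Ici m) (fun _ => (1:ℝ)) := funext fun z => cdf_gaussian_zero m z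
  rw [h, IntegrableOn, integrable_indicator_iff measurableSet_Ici, IntegrableOn,
    Measure.restrict_restrict measurableSet_Ici, Set.Ici_inter_Iic]
  exact integrableOn_const (by rw [Real.volume_Icc]; exact ENNReal.ofReal_ne_top)

lemma integral_cdf_gaussian_zero (m u : ℝ) :
    ∫ z in Set.Iic u, cdf (gaussianReal m ⟨(0:ℝ)^2, sq_nonneg 0⟩) z = max (u - m) 0 := by
  have h : cdf (gaussianReal m ⟨(0:ℝ)^2, sq_nonneg 0⟩)
      = Set.indicator (Set.Ici m) (fun _ => (1:ℝ)) := funext fun z => cdf_gaussian_zero m z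
  rw [h, setIntegral_indicator measurableSet_Ici, Set.Iic_inter_Ici, setIntegral_const,
    measureReal_def, Real.volume_Icc, smul_eq_mul, mul_one]
  rcases le_total m u with hmu | hmu
  · rw [ENNReal.toReal_ofReal (by linarith), max_eq_left (by linarith)]
  · rw [ENNReal.ofReal_of_nonpos (by linarith), max_eq_right (by linarith)]
    simp
lemma hasDerivAt_mul_npsi_div (c : ℝ) {t : ℝ} (ht : 0 < t) :
    HasDerivAt (fun t : ℝ => t * npsi (c/t)) (nphi (c/t)) t := by
  have ht' : t ≠ 0 := ne_of_gt ht
  have hinner : HasDerivAt (fun t : ℝ => c/t) (-(c/t^2)) t := by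
    have := (hasDerivAt_inv ht').const_mul c
    simp only [div_eq_mul_inv]
    exact this.congr_deriv (by field_simp)
  have h := (hasDerivAt_id t).mul ((hasDerivAt_npsi (c/t)).comp t hinner)
  simp only [id_eq, one_mul] at h
  apply h.congr_deriv
  unfold npsi
  simp only [Function.comp_apply]
  field_simp
  ring

lemma smul_npsi_mono {s s' : ℝ} (c : ℝ) (hs : 0 < s) (hss' : s ≤ s') :
    s * npsi (c/s) ≤ s' * npsi (c/s') := by
  have hd : ∀ t ∈ Set.Ici s, HasDerivAt (fun t : ℝ => t * npsi (c/t)) (nphi (c/t)) t :=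
    fun t htm => hasDerivAt_mul_npsi_div c (lt_of_lt_of_le hs htm)
  have hdiff : DifferentiableOn ℝ (fun t : ℝ => t * npsi (c/t)) (Set.Ici s) :=
    fun t htm => (hd t htm).differentiableAt.differentiableWithinAt
  have hmono : MonotoneOn (fun t : ℝ => t * npsi (c/t)) (Set.Ici s) := by
    apply monotoneOn_of_deriv_nonneg (convex_Ici s) hdiff.continuousOn
      (hdiff.mono interior_subset)
    intro x hx
    rw [interior_Ici] at hx
    rw [(hd x (Set.mem_Ici.mpr (le_of_lt (Set.mem_Ioi.mp hx)))).deriv]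
    exact nphi_nonneg _
  exact hmono Set.self_mem_Ici hss' hss'

lemma quadratic_tendsto_atBot {a : ℝ} (b c : ℝ) (ha : a < 0) :
    Tendsto (fun u : ℝ => a*u^2 + b*u + c) atBot atBot := by
  have h1 : Tendsto (fun u : ℝ => u * (a*u + b)) atBot atBot := by
    apply Filter.Tendsto.atBot_mul_atTop₀ tendsto_id
    exact tendsto_atTop_add_const_right _ b ((tendsto_const_mul_atTop_of_neg ha).mpr tendsto_id)
  have h2 := tendsto_atBot_add_const_right _ c h1
  refine h2.congr (fun u => by ring)

lemma ssd_iff_integral_le (P Q : Measure ℝ) [IsProbabilityMeasure P] [IsProbabilityMeasure Q]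
    (hP : ∀ u : ℝ, IntegrableOn (cdf P) (Set.Iic u))
    (hQ : ∀ u : ℝ, IntegrableOn (cdf Q) (Set.Iic u)) :
    SSD P Q ↔ ∀ u : ℝ, (∫ z in Set.Iic u, cdf P z) ≤ ∫ z in Set.Iic u, cdf Q z := by
  unfold SSD
  have h : ∀ u : ℝ, (∫ z in Set.Iic u, (cdf P z - cdf Q z))
      = (∫ z in Set.Iic u, cdf P z) - ∫ z in Set.Iic u, cdf Q z :=
    fun u => integral_sub (hP u) (hQ u)
  constructor
  · intro hs u
    have := hs u
    rw [h u] at this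
    linarith
  · intro hs u
    rw [h u]
    linarith [hs u]
lemma integrableOn_cdf_gaussian' (m s u : ℝ) (hs : 0 ≤ s) :
    IntegrableOn (cdf (gaussianReal m ⟨s^2, sq_nonneg s⟩)) (Set.Iic u) := by
  rcases hs.eq_or_lt with h0 | hpos
  · subst h0; exact integrableOn_cdf_gaussian_zero m u
  · exact integrableOn_cdf_gaussian m s u hpos

lemma integral_cdf_ge (m s u : ℝ) (hs : 0 ≤ s) :
    u - m ≤ ∫ z in Set.Iic u, cdf (gaussianReal m ⟨s^2, sq_nonneg s⟩) z := by
  rcases hs.eq_or_lt with h0 | hpos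
  · subst h0; rw [integral_cdf_gaussian_zero]; exact le_max_left _ _
  · rw [integral_cdf_gaussian m s u hpos]
    calc u - m = s * ((u - m)/s) := by field_simp
      _ ≤ s * npsi ((u - m)/s) :=
        mul_le_mul_of_nonneg_left (npsi_ge_id _) hpos.le

lemma ssd_gaussian_iff (m1 m2 s1 s2 : ℝ) (hs1 : 0 ≤ s1) (hs2 : 0 < s2) :
    SSD (gaussianReal m1 ⟨s1^2, sq_nonneg s1⟩) (gaussianReal m2 ⟨s2^2, sq_nonneg s2⟩) ↔
      (m2 ≤ m1 ∧ s1 ≤ s2) := by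
  rw [ssd_iff_integral_le _ _ (fun u => integrableOn_cdf_gaussian' m1 s1 u hs1)
    (fun u => integrableOn_cdf_gaussian' m2 s2 u hs2.le)]
  constructor
  · intro h
    have hEQ := fun u => integral_cdf_gaussian m2 s2 u hs2
    constructor
    · -- m2 ≤ m1
      have hev : ∀ᶠ u in atTop, m2 ≤ m1 + s2 * nphi ((u - m2)/s2) := by
        filter_upwards [eventually_ge_atTop m2] with u hu
        have h1 : u - m1 ≤ ∫ z in Set.Iic u, cdf (gaussianReal m1 ⟨s1^2, sq_nonneg s1⟩) z :=
          integral_cdf_ge m1 s1 u hs1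
        have h2 := h u
        rw [hEQ u] at h2
        have h3 : s2 * npsi ((u - m2)/s2) ≤ (u - m2) + s2 * nphi ((u - m2)/s2) := by
          have hx : 0 ≤ (u - m2)/s2 := div_nonneg (by linarith) hs2.le
          calc s2 * npsi ((u - m2)/s2) ≤ s2 * ((u - m2)/s2 + nphi ((u - m2)/s2)) :=
                mul_le_mul_of_nonneg_left (npsi_le_add_nphi hx) hs2.le
            _ = (u - m2) + s2 * nphi ((u - m2)/s2) := by field_simp
        linarith
      have htend : Tendsto (fun u : ℝ => m1 + s2 * nphi ((u - m2)/s2)) atTop (𝓝 m1) := by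
        have hin : Tendsto (fun u : ℝ => (u - m2)/s2) atTop atTop := by
          apply Filter.Tendsto.atTop_div_const hs2
          simpa [sub_eq_add_neg] using tendsto_atTop_add_const_right atTop (-m2) tendsto_id
        have := ((tendsto_nphi_atTop.comp hin).const_mul s2).const_add m1
        simpa using this
      exact ge_of_tendsto htend hev
    · -- s1 ≤ s2
      by_contra hlt
      push_neg at hlt
      have hs1pos : 0 < s1 := hs2.trans hlt
      set A : ℝ := (1/s1^2 - 1/s2^2)/2 with hA
      set B : ℝ := m2/s2^2 - (m1 + 2*s1)/s1^2 with hB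
      set C : ℝ := (m1 + 2*s1)^2/(2*s1^2) - m2^2/(2*s2^2) with hC
      set D : ℝ → ℝ := fun u => ((u - m1)/s1 - 2)^2/2 - ((u - m2)/s2)^2/2 with hD
      have hAneg : A < 0 := by
        have h12 : 1/s1^2 < 1/s2^2 := by
          apply one_div_lt_one_div_of_lt (by positivity)
          nlinarith
        rw [hA]; linarith
      have hDeq : ∀ u, D u = A*u^2 + B*u + C := by
        intro u
        rw [hD, hA, hB, hC]
        field_simp
        ring
      have key : ∀ u, u ≤ m2 → u ≤ m1 + s1 → s1 ≤ s2 * Real.exp (D u) := by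
        intro u hu2 hu1
        have hx1 : (u - m1)/s1 ≤ 1 := by
          rw [div_le_one hs1pos]; linarith
        have e1 : s1 * nphi ((u - m1)/s1 - 2) ≤ s1 * npsi ((u - m1)/s1) := by
          exact mul_le_mul_of_nonneg_left (nphi_le_npsi hx1) hs1pos.le
        have e2 := h u
        rw [integral_cdf_gaussian m1 s1 u hs1pos, hEQ u] at e2
        have e3 : s2 * npsi ((u - m2)/s2) ≤ s2 * nphi ((u - m2)/s2) := by
          apply mul_le_mul_of_nonneg_left _ hs2.le
          apply npsi_le_nphi
          apply div_nonpos_of_nonpos_of_nonneg (by linarith) hs2.le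
        have hval : s1 * nphi ((u - m1)/s1 - 2) ≤ s2 * nphi ((u - m2)/s2) := by linarith
        set y1 : ℝ := (u - m1)/s1 - 2 with hy1
        set y2 : ℝ := (u - m2)/s2 with hy2
        rw [nphi_eq y1, nphi_eq y2] at hval
        have hc : (0:ℝ) < (Real.sqrt (2 * π))⁻¹ := by positivity
        have base : s1 * Real.exp (-(y1^2)/2) ≤ s2 * Real.exp (-(y2^2)/2) := by
          have h' : (Real.sqrt (2 * π))⁻¹ * (s1 * Real.exp (-(y1^2)/2))
              ≤ (Real.sqrt (2 * π))⁻¹ * (s2 * Real.exp (-(y2^2)/2)) := by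
            calc (Real.sqrt (2 * π))⁻¹ * (s1 * Real.exp (-(y1^2)/2))
                = s1 * ((Real.sqrt (2 * π))⁻¹ * Real.exp (-(y1^2)/2)) := by ring
              _ ≤ s2 * ((Real.sqrt (2 * π))⁻¹ * Real.exp (-(y2^2)/2)) := hval
              _ = (Real.sqrt (2 * π))⁻¹ * (s2 * Real.exp (-(y2^2)/2)) := by ring
          exact le_of_mul_le_mul_left h' hc
        have hDval : D u = y1^2/2 - y2^2/2 := by rw [hD, hy1, hy2]
        rw [hDval]
        calc s1 = s1 * Real.exp (-(y1^2)/2) * Real.exp (y1^2/2) := by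
              have hz : -(y1^2)/2 + y1^2/2 = 0 := by ring
              rw [mul_assoc, ← Real.exp_add, hz, Real.exp_zero, mul_one]
          _ ≤ s2 * Real.exp (-(y2^2)/2) * Real.exp (y1^2/2) :=
              mul_le_mul_of_nonneg_right base (Real.exp_nonneg _)
          _ = s2 * Real.exp (y1^2/2 - y2^2/2) := by
              rw [mul_assoc, ← Real.exp_add]; ring_nf
      have htendD : Tendsto D atBot atBot := by
        have := quadratic_tendsto_atBot B C hAneg
        exact this.congr (fun u => (hDeq u).symm)
      have htend : Tendsto (fun u => s2 * Real.exp (D u)) atBot (𝓝 0) := by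
        have := (Real.tendsto_exp_atBot.comp htendD).const_mul s2
        simpa using this
      have hev : ∀ᶠ u in atBot, s1 ≤ s2 * Real.exp (D u) := by
        filter_upwards [eventually_le_atBot m2, eventually_le_atBot (m1 + s1)] with u h1 h2
        exact key u h1 h2
      have : s1 ≤ 0 := ge_of_tendsto htend hev
      linarith
  · rintro ⟨hm, hs⟩ u
    rcases hs1.eq_or_lt with h0 | hpos
    · rw [← h0, integral_cdf_gaussian_zero, integral_cdf_gaussian m2 s2 u hs2]
      apply max_le
      · calc u - m1 ≤ u - m2 := by linarith
          _ = s2 * ((u - m2)/s2) := by field_simp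
          _ ≤ s2 * npsi ((u - m2)/s2) :=
            mul_le_mul_of_nonneg_left (npsi_ge_id _) hs2.le
      · exact mul_nonneg hs2.le (npsi_nonneg _)
    · rw [integral_cdf_gaussian m1 s1 u hpos, integral_cdf_gaussian m2 s2 u hs2]
      calc s1 * npsi ((u - m1)/s1) ≤ s1 * npsi ((u - m2)/s1) := by
            apply mul_le_mul_of_nonneg_left _ hpos.le
            apply npsi_monotone
            gcongr
        _ ≤ s2 * npsi ((u - m2)/s2) := smul_npsi_mono _ hpos hs
lemma gaussian_affine_map (m t a c : ℝ) :
    (gaussianReal m ⟨t^2, sq_nonneg t⟩).map (fun z => a + c * (z - m))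
      = gaussianReal a ⟨(c*t)^2, sq_nonneg (c*t)⟩ := by
  have hfe : (fun z : ℝ => a + c * (z - m)) = (fun x => x + (a - c*m)) ∘ (fun z => c * z) := by
    funext z; simp only [Function.comp]; ring
  rw [hfe, ← Measure.map_map (measurable_add_const _) (measurable_const_mul c)]
  erw [gaussianReal_map_const_mul, gaussianReal_map_add_const]
  congr 1
  · ring
  · ext
    show c ^ 2 * t ^ 2 = (c * t) ^ 2
    ring

/-- Under normally distributed coalitional values, the SSD-core with transfer payments is
nonempty iff the core of the mean game and the nonnegative cost core of the deviation game
are both nonempty. -/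
theorem ssd_core_normal_iff {N : Type*} [Fintype N] [DecidableEq N] [Nonempty N]
    (μ σ : Finset N → ℝ)
    (hμ0 : μ ∅ = 0)
    (hσ : ∀ S : Finset N, S.Nonempty → 0 < σ S) :
    (∃ d r : N → ℝ, (∀ i, 0 ≤ r i) ∧ (∑ i : N, d i = μ Finset.univ) ∧
        (∑ i : N, r i = 1) ∧
        ∀ S : Finset N, S.Nonempty →
          SSD ((gaussianReal (μ Finset.univ) ⟨σ Finset.univ ^ 2, sq_nonneg _⟩).map
              (fun z => (∑ i ∈ S, d i) + (∑ i ∈ S, r i) * (z - μ Finset.univ)))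
            (gaussianReal (μ S) ⟨σ S ^ 2, sq_nonneg _⟩)) ↔
      (core μ).Nonempty ∧
        (costCore (fun S => if S = ∅ then 0 else σ S / σ Finset.univ)).Nonempty := by
  have hU : (Finset.univ : Finset N).Nonempty := Finset.univ_nonempty
  have hσU : 0 < σ Finset.univ := hσ _ hU
  constructor
  · rintro ⟨d, r, hr0, hdN, hrN, hSSD⟩
    have key : ∀ S : Finset N, S.Nonempty →
        μ S ≤ ∑ i ∈ S, d i ∧ (∑ i ∈ S, r i) * σ Finset.univ ≤ σ S := by
      intro S hS
      have h := hSSD S hS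
      rw [gaussian_affine_map] at h
      exact (ssd_gaussian_iff (∑ i ∈ S, d i) (μ S) ((∑ i ∈ S, r i) * σ Finset.univ) (σ S)
        (mul_nonneg (Finset.sum_nonneg fun i _ => hr0 i) hσU.le) (hσ S hS)).mp h
    refine ⟨⟨d, ?_, hdN⟩, ⟨r, hr0, ?_, ?_⟩⟩
    · intro S
      rcases S.eq_empty_or_nonempty with rfl | hS
      · simp [hμ0]
      · exact (key S hS).1
    · intro S
      rcases S.eq_empty_or_nonempty with rfl | hS
      · simp
      · beta_reduce
        rw [if_neg (Finset.nonempty_iff_ne_empty.mp hS), le_div_iff₀ hσU]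
        exact (key S hS).2
    · beta_reduce
      rw [if_neg (Finset.nonempty_iff_ne_empty.mp hU), div_self (ne_of_gt hσU)]
      exact hrN
  · rintro ⟨⟨d, hd1, hd2⟩, ⟨r, hr0, hr1, hr2⟩⟩
    have hrN : ∑ i, r i = 1 := by
      rw [hr2]
      beta_reduce
      rw [if_neg (Finset.nonempty_iff_ne_empty.mp hU), div_self (ne_of_gt hσU)]
    refine ⟨d, r, hr0, hd2, hrN, ?_⟩
    intro S hS
    rw [gaussian_affine_map]
    apply (ssd_gaussian_iff _ _ _ _
      (mul_nonneg (Finset.sum_nonneg fun i _ => hr0 i) hσU.le) (hσ S hS)).mpr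
    refine ⟨hd1 S, ?_⟩
    have := hr1 S
    beta_reduce at this
    rw [if_neg (Finset.nonempty_iff_ne_empty.mp hS)] at this
    exact (le_div_iff₀ hσU).mp this
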